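/- Robbins' bounds: for every positive integer n, √(2π)·n^{n+1/2}·e^{−n}·e^{1/(12n+1)} < n! < √(2π)·n^{n+1/2}·e^{−n}·e^{1/(12n)}. -/

import Mathlib

open Filter Topology Real Stirling

/-- The series identity, with casts cleaned up. -/
lemma robbins_hasSum (m : ℕ) :
    HasSum (fun k : ℕ => (1 : ℝ) / (2 * ((k : ℝ) + 1) + 1) *
        (((1 : ℝ) / (2 * ((m : ℝ) + 1) + 1)) ^ 2) ^ (k + 1))
      (Real.log (stirlingSeq (m + 1)) - Real.log (stirlingSeq (m + 2))) := by
  have h := Stirling.log_stirlingSeq_diff_hasSum m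
  push_cast at h
  exact h

/-- Upper bound on successive log-differences (Robbins' refinement). -/
lemma robbins_diff_lt (m : ℕ) :
    Real.log (stirlingSeq (m + 1)) - Real.log (stirlingSeq (m + 2)) <
      1 / (12 * ((m : ℝ) + 1)) - 1 / (12 * ((m : ℝ) + 2)) := by
  set x : ℝ := ((1 : ℝ) / (2 * ((m : ℝ) + 1) + 1)) ^ 2 with hxdef
  have hx0 : 0 < x := by positivity
  have hb : (1 : ℝ) / (2 * ((m : ℝ) + 1) + 1) < 1 := by
    rw [div_lt_one (by positivity)]
    nlinarith [Nat.cast_nonneg (α := ℝ) m]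
  have hx1 : x < 1 := by
    rw [hxdef]
    calc ((1 : ℝ) / (2 * ((m : ℝ) + 1) + 1)) ^ 2 ≤ (1 : ℝ) / (2 * ((m : ℝ) + 1) + 1) :=
          pow_le_of_le_one (by positivity) hb.le two_ne_zero
      _ < 1 := hb
  have hgeo : HasSum (fun k : ℕ => (1 : ℝ) / 3 * x ^ (k + 1)) (1 / 3 * (x / (1 - x))) := by
    have h := (hasSum_geometric_of_lt_one hx0.le hx1).mul_left x
    have h2 : HasSum (fun k : ℕ => x ^ (k + 1)) (x / (1 - x)) := by
      simpa [_root_.pow_succ', div_eq_mul_inv] using h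
    exact h2.mul_left _
  have hlt : Real.log (stirlingSeq (m + 1)) - Real.log (stirlingSeq (m + 2)) <
      1 / 3 * (x / (1 - x)) := by
    refine hasSum_lt (i := 1) (fun k => ?_) ?_ (robbins_hasSum m) hgeo
    · have hxk : (0 : ℝ) ≤ x ^ (k + 1) := by positivity
      have : (1 : ℝ) / (2 * ((k : ℝ) + 1) + 1) ≤ 1 / 3 := by
        apply one_div_le_one_div_of_le (by norm_num)
        nlinarith [Nat.cast_nonneg (α := ℝ) k]
      exact mul_le_mul_of_nonneg_right this hxk
    · have hxk : (0 : ℝ) < x ^ (1 + 1) := by positivity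
      have : (1 : ℝ) / (2 * ((1 : ℕ) + (1 : ℝ)) + 1) < 1 / 3 := by norm_num
      exact mul_lt_mul_of_pos_right this hxk
  refine hlt.trans_le (le_of_eq ?_)
  have h1 : (2 * ((m : ℝ) + 1) + 1) ≠ 0 := by positivity
  have h2 : (1 : ℝ) - x ≠ 0 := by nlinarith
  rw [hxdef] at h2 ⊢
  field_simp
  ring_nf
  have h12 : (24 + (m : ℝ) * 36 + (m : ℝ) ^ 2 * 12) ≠ 0 := by positivity
  field_simp
  ring

/-- Lower bound on successive log-differences (Robbins' refinement). -/
lemma robbins_lt_diff (m : ℕ) :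
    1 / (12 * ((m : ℝ) + 1) + 1) - 1 / (12 * ((m : ℝ) + 2) + 1) <
      Real.log (stirlingSeq (m + 1)) - Real.log (stirlingSeq (m + 2)) := by
  set x : ℝ := ((1 : ℝ) / (2 * ((m : ℝ) + 1) + 1)) ^ 2 with hxdef
  have hx0 : 0 < x := by positivity
  have hfirst : (1 : ℝ) / 3 * x ≤
      Real.log (stirlingSeq (m + 1)) - Real.log (stirlingSeq (m + 2)) := by
    have h := le_hasSum (robbins_hasSum m) 0 (fun j _ => by positivity)
    calc (1 : ℝ) / 3 * x = 1 / (2 * ((0 : ℕ) + (1 : ℝ)) + 1) * x ^ (0 + 1) := by norm_num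
      _ ≤ _ := h
  have hkey : 1 / (12 * ((m : ℝ) + 1) + 1) - 1 / (12 * ((m : ℝ) + 2) + 1) < 1 / 3 * x := by
    have hm : (0 : ℝ) ≤ (m : ℝ) := Nat.cast_nonneg m
    rw [hxdef, div_pow, one_pow]
    rw [div_sub_div _ _ (by positivity) (by positivity), mul_one_div,
      div_lt_div_iff₀ (by positivity) (by positivity)]
    nlinarith
  linarith

/-- `log (stirlingSeq (k+1))` tends to `log √π`. -/
lemma robbins_tendsto_log :
    Tendsto (fun k : ℕ => Real.log (stirlingSeq (k + 1))) atTop (𝓝 (Real.log (Real.sqrt π))) := by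
  have h := Stirling.tendsto_stirlingSeq_sqrt_pi.comp (tendsto_add_atTop_nat 1)
  exact h.log (Real.sqrt_pos.mpr Real.pi_pos).ne'

lemma robbins_tendsto_aux (c : ℝ) :
    Tendsto (fun k : ℕ => 1 / (12 * ((k : ℝ) + 1) + c)) atTop (𝓝 0) := by
  have hA : Tendsto (fun k : ℕ => 12 * ((k : ℝ) + 1) + c) atTop atTop := by
    apply tendsto_atTop_add_const_right
    apply Tendsto.const_mul_atTop (by norm_num : (0 : ℝ) < 12)
    exact tendsto_atTop_add_const_right _ _ tendsto_natCast_atTop_atTop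
  simpa [one_div, Pi.inv_def] using hA.inv_tendsto_atTop

/-- Upper Robbins log-bound. -/
lemma robbins_log_upper (m : ℕ) :
    Real.log (stirlingSeq (m + 1)) < Real.log (Real.sqrt π) + 1 / (12 * ((m : ℝ) + 1)) := by
  set g : ℕ → ℝ := fun k => Real.log (stirlingSeq (k + 1)) - 1 / (12 * ((k : ℝ) + 1)) with hg
  have hstep : ∀ k, g k < g (k + 1) := by
    intro k
    have h := robbins_diff_lt k
    simp only [hg]
    push_cast
    have e1 : (Real.log (stirlingSeq (k + 1 + 1))) = Real.log (stirlingSeq (k + 2)) := by norm_num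
    have e2 : (1 : ℝ) / (12 * ((k : ℝ) + 1 + 1)) = 1 / (12 * ((k : ℝ) + 2)) := by ring_nf
    rw [e1]
    linarith
  have hmono : Monotone g := monotone_nat_of_le_succ fun k => (hstep k).le
  have hlim : Tendsto g atTop (𝓝 (Real.log (Real.sqrt π))) := by
    have := robbins_tendsto_log.sub (robbins_tendsto_aux 0)
    simpa [hg] using this
  have h1 : g (m + 1) ≤ Real.log (Real.sqrt π) := hmono.ge_of_tendsto hlim (m + 1)
  have h2 : g m < Real.log (Real.sqrt π) := lt_of_lt_of_le (hstep m) h1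
  simp only [hg] at h2
  linarith

/-- Lower Robbins log-bound. -/
lemma robbins_log_lower (m : ℕ) :
    Real.log (Real.sqrt π) + 1 / (12 * ((m : ℝ) + 1) + 1) < Real.log (stirlingSeq (m + 1)) := by
  set g : ℕ → ℝ := fun k => Real.log (stirlingSeq (k + 1)) - 1 / (12 * ((k : ℝ) + 1) + 1) with hg
  have hstep : ∀ k, g (k + 1) < g k := by
    intro k
    have h := robbins_lt_diff k
    simp only [hg]
    push_cast
    have e1 : (Real.log (stirlingSeq (k + 1 + 1))) = Real.log (stirlingSeq (k + 2)) := by norm_num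
    have e2 : (1 : ℝ) / (12 * ((k : ℝ) + 1 + 1) + 1) = 1 / (12 * ((k : ℝ) + 2) + 1) := by ring_nf
    rw [e1]
    linarith
  have hanti : Antitone g := antitone_nat_of_succ_le fun k => (hstep k).le
  have hlim : Tendsto g atTop (𝓝 (Real.log (Real.sqrt π))) := by
    have := robbins_tendsto_log.sub (robbins_tendsto_aux 1)
    simpa [hg] using this
  have h1 : Real.log (Real.sqrt π) ≤ g (m + 1) := hanti.le_of_tendsto hlim (m + 1)
  have h2 : Real.log (Real.sqrt π) < g m := lt_of_le_of_lt h1 (hstep m)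
  simp only [hg] at h2
  linarith

/-- Robbins' bounds: for every positive integer `n`,
`√(2π)·n^{n+1/2}·e^{−n}·e^{1/(12n+1)} < n! < √(2π)·n^{n+1/2}·e^{−n}·e^{1/(12n)}`. -/
theorem stmt8 (n : ℕ) (hn : 1 ≤ n) :
    Real.sqrt (2 * Real.pi) * (n : ℝ) ^ ((n : ℝ) + 1 / 2) * Real.exp (-(n : ℝ)) *
        Real.exp (1 / (12 * (n : ℝ) + 1)) < (n.factorial : ℝ) ∧
    (n.factorial : ℝ) < Real.sqrt (2 * Real.pi) * (n : ℝ) ^ ((n : ℝ) + 1 / 2) *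
        Real.exp (-(n : ℝ)) * Real.exp (1 / (12 * (n : ℝ))) := by
  obtain ⟨m, rfl⟩ : ∃ m, n = m + 1 := ⟨n - 1, by omega⟩
  have hn0 : (0 : ℝ) < ((m + 1 : ℕ) : ℝ) := by positivity
  have h0 : Real.sqrt (2 * ((m + 1 : ℕ) : ℝ)) * (((m + 1 : ℕ) : ℝ) / Real.exp 1) ^ (m + 1) ≠ 0 :=
    by positivity
  set C : ℝ := Real.sqrt (2 * ((m + 1 : ℕ) : ℝ)) * (((m + 1 : ℕ) : ℝ) / Real.exp 1) ^ (m + 1)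
    with hCdef
  have hC : 0 < C := by rw [hCdef]; positivity
  have hfact : (((m + 1).factorial : ℕ) : ℝ) = stirlingSeq (m + 1) * C := by
    rw [hCdef, stirlingSeq]
    exact (div_mul_cancel₀ _ h0).symm
  have hsp : Real.sqrt (2 * π) * ((m + 1 : ℕ) : ℝ) ^ (((m + 1 : ℕ) : ℝ) + 1 / 2) *
      Real.exp (-((m + 1 : ℕ) : ℝ)) = Real.sqrt π * C := by
    rw [Real.rpow_add hn0, Real.rpow_natCast, ← Real.sqrt_eq_rpow, hCdef,
      Real.sqrt_mul (by norm_num : (0 : ℝ) ≤ 2), Real.sqrt_mul (by norm_num : (0 : ℝ) ≤ 2),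
      div_pow, Real.exp_one_pow, Real.exp_neg]
    have h1 : Real.exp ((m + 1 : ℕ) : ℝ) ≠ 0 := Real.exp_ne_zero _
    field_simp
  have hpos : 0 < stirlingSeq (m + 1) := Stirling.stirlingSeq'_pos m
  have hsqpi : 0 < Real.sqrt π := Real.sqrt_pos.mpr Real.pi_pos
  have hcast : ((m + 1 : ℕ) : ℝ) = (m : ℝ) + 1 := by push_cast; ring
  constructor
  · have hl := robbins_log_lower m
    have h2 : Real.sqrt π * Real.exp (1 / (12 * ((m : ℝ) + 1) + 1)) < stirlingSeq (m + 1) := by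
      have h3 := Real.exp_lt_exp.mpr hl
      rwa [Real.exp_log hpos, Real.exp_add, Real.exp_log hsqpi] at h3
    rw [hsp, hfact, hcast]
    calc Real.sqrt π * C * Real.exp (1 / (12 * ((m : ℝ) + 1) + 1))
        = Real.sqrt π * Real.exp (1 / (12 * ((m : ℝ) + 1) + 1)) * C := by ring
      _ < stirlingSeq (m + 1) * C := mul_lt_mul_of_pos_right h2 hC
  · have hu := robbins_log_upper m
    have h2 : stirlingSeq (m + 1) < Real.sqrt π * Real.exp (1 / (12 * ((m : ℝ) + 1))) := by
      have h3 := Real.exp_lt_exp.mpr hu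
      rwa [Real.exp_log hpos, Real.exp_add, Real.exp_log hsqpi] at h3
    rw [hsp, hfact, hcast]
    calc stirlingSeq (m + 1) * C
        < Real.sqrt π * Real.exp (1 / (12 * ((m : ℝ) + 1))) * C :=
          mul_lt_mul_of_pos_right h2 hC
      _ = Real.sqrt π * C * Real.exp (1 / (12 * ((m : ℝ) + 1))) := by ring
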